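/- arXiv:2003.07287 — 2 statements merged into one kernel-verified Lean document; each statement's English description precedes it below -/
import Mathlib

section
/- A two-dimensional affine quadric with a rational point contains a rational line if and only if the relevant discriminant is a square: assume the equation q(x) = m has a solution x ∈ ℚ³. Then −m·det(q) is a square in ℚ if and only if there exist a, b ∈ ℚ³ with b ≠ 0 such that q(a + t·b) = m for every t ∈ ℚ. -/
open MvPolynomial

/-- The Gram matrix (over `ℚ`) of a quadratic form given as an integral
multivariate polynomial. -/
noncomputable def quadGram {n : ℕ} (q : MvPolynomial (Fin n) ℤ) :
    Matrix (Fin n) (Fin n) ℚ := fun i j =>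
  if i = j then ((q.coeff (Finsupp.single i 2) : ℤ) : ℚ)
  else ((q.coeff (Finsupp.single i 1 + Finsupp.single j 1) : ℤ) : ℚ) / 2

namespace TernaryQuadricAux

open Matrix Finsupp

lemma fin3_eq (u v : Fin 3 →₀ ℕ) : u = v ↔ u 0 = v 0 ∧ u 1 = v 1 ∧ u 2 = v 2 := by
  constructor
  · rintro rfl; exact ⟨rfl, rfl, rfl⟩
  · rintro ⟨h0, h1, h2⟩; ext i; fin_cases i <;> assumption

lemma fin3_sum (d : Fin 3 →₀ ℕ) : (d.sum fun _ n => n) = d 0 + d 1 + d 2 := by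
  rw [Finsupp.sum_fintype _ _ (fun _ => rfl), Fin.sum_univ_three]

lemma deg2_classify (d : Fin 3 →₀ ℕ) (hd : (d.sum fun _ n => n) = 2) :
    d = single 0 2 ∨ d = single 1 2 ∨ d = single 2 2 ∨
    d = single 0 1 + single 1 1 ∨ d = single 0 1 + single 2 1 ∨
    d = single 1 1 + single 2 1 := by
  rw [fin3_sum] at hd
  simp only [fin3_eq, Finsupp.add_apply, Finsupp.single_apply, Fin.ext_iff]
  norm_num
  omega

lemma q_struct (q : MvPolynomial (Fin 3) ℤ) (hq : q.IsHomogeneous 2) :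
    q = monomial (single 0 2) (q.coeff (single 0 2))
      + monomial (single 1 2) (q.coeff (single 1 2))
      + monomial (single 2 2) (q.coeff (single 2 2))
      + monomial (single 0 1 + single 1 1) (q.coeff (single 0 1 + single 1 1))
      + monomial (single 0 1 + single 2 1) (q.coeff (single 0 1 + single 2 1))
      + monomial (single 1 1 + single 2 1) (q.coeff (single 1 1 + single 2 1)) := by
  ext d
  simp only [coeff_add, coeff_monomial]
  by_cases hd : (d.sum fun _ n => n) = 2
  · rcases deg2_classify d hd with rfl | rfl | rfl | rfl | rfl | rfl <;>
      simp only [fin3_eq, Finsupp.add_apply, Finsupp.single_apply, Fin.ext_iff] <;>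
      norm_num
  · rw [hq.coeff_eq_zero hd]
    have h2 : ∀ e : Fin 3 →₀ ℕ, (e.sum fun _ n => n) = 2 → ¬ (e = d) := by
      rintro e he rfl; exact hd he
    rw [if_neg, if_neg, if_neg, if_neg, if_neg, if_neg]
    · norm_num
    all_goals apply h2
    all_goals rw [fin3_sum]
    all_goals simp [Finsupp.single_apply, Fin.ext_iff]

lemma key (q : MvPolynomial (Fin 3) ℤ) (hq : q.IsHomogeneous 2) (x : Fin 3 → ℚ) :
    aeval x q = x ⬝ᵥ (quadGram q).mulVec x := by
  conv_lhs => rw [q_struct q hq]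
  simp only [map_add, aeval_monomial, algebraMap_int_eq, eq_intCast,
    Finsupp.prod_add_index' (fun a => pow_zero (x a)) (fun a b c => pow_add (x a) b c),
    Finsupp.prod_single_index (pow_zero _)]
  simp only [quadGram, dotProduct, mulVec, Fin.sum_univ_three]
  norm_num [Fin.ext_iff]
  rw [show (single (1:Fin 3) 1 + single 0 1) = single 0 1 + single 1 1 from add_comm _ _,
      show (single (2:Fin 3) 1 + single 0 1) = single 0 1 + single 2 1 from add_comm _ _,
      show (single (2:Fin 3) 1 + single 1 1) = single 1 1 + single 2 1 from add_comm _ _]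
  ring

variable (G : Matrix (Fin 3) (Fin 3) ℚ)

lemma bsym (hG : ∀ i j, G i j = G j i) (x y : Fin 3 → ℚ) :
    x ⬝ᵥ G.mulVec y = y ⬝ᵥ G.mulVec x := by
  simp only [dotProduct, mulVec, Fin.sum_univ_three]
  linear_combination (x 0 * y 1 - x 1 * y 0) * hG 0 1 + (x 0 * y 2 - x 2 * y 0) * hG 0 2 +
    (x 1 * y 2 - x 2 * y 1) * hG 1 2

lemma entry_eq (P : Matrix (Fin 3) (Fin 3) ℚ) (i j : Fin 3) :
    (P * G * Pᵀ) i j = (P i) ⬝ᵥ G.mulVec (P j) := by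
  simp only [Matrix.mul_apply, mulVec, dotProduct, Matrix.transpose_apply, Fin.sum_univ_three]
  ring

lemma square_of_line (hG : ∀ i j, G i j = G j i) (hdet : G.det ≠ 0) (m : ℚ) (hm : m ≠ 0)
    (a b : Fin 3 → ℚ) (hb : b ≠ 0) (ha : a ⬝ᵥ G.mulVec a = m)
    (hab : a ⬝ᵥ G.mulVec b = 0) (hbb : b ⬝ᵥ G.mulVec b = 0) :
    IsSquare (-m * G.det) := by
  have hba : b ⬝ᵥ G.mulVec a = 0 := by rw [bsym G hG]; exact hab
  have hw : G.mulVec b ≠ 0 := by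
    intro h; exact hdet (Matrix.exists_mulVec_eq_zero_iff.mp ⟨b, hb, h⟩)
  obtain ⟨i, hi⟩ : ∃ i, G.mulVec b i ≠ 0 := by
    by_contra h; push_neg at h; exact hw (funext h)
  set c : Fin 3 → ℚ := Pi.single i 1 with hc_def
  have hc : c ⬝ᵥ G.mulVec b = G.mulVec b i := by
    simp [hc_def, dotProduct, Pi.single_apply]
  set P : Matrix (Fin 3) (Fin 3) ℚ := Matrix.of ![a, b, c] with hP_def
  have hPdet : P.det ≠ 0 := by
    intro h0
    obtain ⟨z, hz, hzP⟩ := Matrix.exists_vecMul_eq_zero_iff.mpr h0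
    have hz' : ∀ j, z 0 * a j + z 1 * b j + z 2 * c j = 0 := by
      intro j
      have := congrFun hzP j
      simpa [Matrix.vecMul, dotProduct, Fin.sum_univ_three, hP_def] using this
    have e1 : z 0 * (a ⬝ᵥ G.mulVec b) + z 1 * (b ⬝ᵥ G.mulVec b) + z 2 * (c ⬝ᵥ G.mulVec b) = 0 := by
      simp only [dotProduct, Fin.sum_univ_three]
      linear_combination (G.mulVec b 0) * hz' 0 + (G.mulVec b 1) * hz' 1 + (G.mulVec b 2) * hz' 2
    rw [hab, hbb, hc] at e1
    have hz2 : z 2 = 0 := by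
      rcases mul_eq_zero.mp (by linarith [e1] : z 2 * G.mulVec b i = 0) with h | h
      · exact h
      · exact absurd h hi
    have e2 : z 0 * (a ⬝ᵥ G.mulVec a) + z 1 * (b ⬝ᵥ G.mulVec a) + z 2 * (c ⬝ᵥ G.mulVec a) = 0 := by
      simp only [dotProduct, Fin.sum_univ_three]
      linear_combination (G.mulVec a 0) * hz' 0 + (G.mulVec a 1) * hz' 1 + (G.mulVec a 2) * hz' 2
    rw [ha, hba, hz2] at e2
    have hz0 : z 0 = 0 := by
      rcases mul_eq_zero.mp (by linarith [e2] : z 0 * m = 0) with h | h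
      · exact h
      · exact absurd h hm
    have hz1 : z 1 = 0 := by
      by_contra h1
      apply hb
      funext j
      have := hz' j
      rw [hz0, hz2] at this
      have : z 1 * b j = 0 := by linarith [this]
      rcases mul_eq_zero.mp this with h | h
      · exact absurd h h1
      · exact h
    apply hz
    funext j
    fin_cases j <;> assumption
  set u := a ⬝ᵥ G.mulVec c with hu_def
  set v := b ⬝ᵥ G.mulVec c with hv_def
  set w2 := c ⬝ᵥ G.mulVec c with hw2_def
  have hca : c ⬝ᵥ G.mulVec a = u := by rw [hu_def, bsym G hG]
  have hcb : c ⬝ᵥ G.mulVec b = v := by rw [hv_def, bsym G hG]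
  have hM : P * G * Pᵀ = !![m, 0, u; 0, 0, v; u, v, w2] := by
    ext i j
    rw [entry_eq]
    fin_cases i <;> fin_cases j <;>
      simp only [hP_def, Matrix.of_apply, Matrix.cons_val_zero, Matrix.cons_val_one,
        Matrix.head_cons, Matrix.cons_val_two, Matrix.tail_cons] <;>
      simp only [Matrix.cons_val', Matrix.cons_val_zero, Matrix.cons_val_one, Matrix.head_cons,
        Matrix.empty_val', Matrix.cons_val_fin_one, Matrix.head_fin_const] <;>
      first
        | exact ha | exact hab | exact hba | exact hbb | rfl
        | exact hca | exact hcb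
  have hdetM : P.det * G.det * P.det = -(m * (v * v)) := by
    have h1 := congrArg Matrix.det hM
    rw [Matrix.det_mul, Matrix.det_mul, Matrix.det_transpose] at h1
    rw [h1, Matrix.det_fin_three]
    norm_num
    simp only [Matrix.cons_val, Matrix.cons_val_fin_one]
    ring
  refine ⟨m * v / P.det, ?_⟩
  field_simp
  linear_combination (-1) * hdetM

lemma iso_vec (hG : ∀ i j, G i j = G j i) (m : ℚ) (hm : m ≠ 0)
    (x₀ : Fin 3 → ℚ) (hx₀ : x₀ ⬝ᵥ G.mulVec x₀ = m) (s : ℚ) (hs : -m * G.det = s * s)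
    (u v : Fin 3 → ℚ) (hu : x₀ ⬝ᵥ G.mulVec u = 0) (hv : x₀ ⬝ᵥ G.mulVec v = 0)
    (hu0 : u ≠ 0) (hind : ∀ α : ℚ, (fun j => α * u j + v j) ≠ 0) :
    ∃ b : Fin 3 → ℚ, b ≠ 0 ∧ x₀ ⬝ᵥ G.mulVec b = 0 ∧ b ⬝ᵥ G.mulVec b = 0 := by
  set Fu := u ⬝ᵥ G.mulVec u with hFu_def
  set Fv := v ⬝ᵥ G.mulVec v with hFv_def
  set h := u ⬝ᵥ G.mulVec v with hh_def
  by_cases hFu : Fu = 0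
  · exact ⟨u, hu0, hu, hFu⟩
  have hux : u ⬝ᵥ G.mulVec x₀ = 0 := by rw [bsym G hG]; exact hu
  have hvx : v ⬝ᵥ G.mulVec x₀ = 0 := by rw [bsym G hG]; exact hv
  have hvu : v ⬝ᵥ G.mulVec u = h := by rw [hh_def, bsym G hG]
  set P : Matrix (Fin 3) (Fin 3) ℚ := Matrix.of ![x₀, u, v] with hP_def
  have hM : P * G * Pᵀ = !![m, 0, 0; 0, Fu, h; 0, h, Fv] := by
    ext i j
    rw [entry_eq]
    fin_cases i <;> fin_cases j <;>
      simp only [hP_def, Matrix.of_apply, Matrix.cons_val_zero, Matrix.cons_val_one,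
        Matrix.head_cons, Matrix.cons_val_two, Matrix.tail_cons] <;>
      simp only [Matrix.cons_val', Matrix.cons_val_zero, Matrix.cons_val_one, Matrix.head_cons,
        Matrix.empty_val', Matrix.cons_val_fin_one, Matrix.head_fin_const] <;>
      first
        | exact hx₀ | exact hu | exact hv | exact hux | exact hvx | exact hvu | rfl
  have hdetM : P.det * G.det * P.det = m * (Fu * Fv - h * h) := by
    have h1 := congrArg Matrix.det hM
    rw [Matrix.det_mul, Matrix.det_mul, Matrix.det_transpose] at h1
    rw [h1, Matrix.det_fin_three]
    norm_num
    simp only [Matrix.cons_val, Matrix.cons_val_fin_one]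
    ring
  set α := (-h + s * P.det / m) / Fu with hα_def
  refine ⟨fun j => α * u j + v j, hind α, ?_, ?_⟩
  · have expand : x₀ ⬝ᵥ G.mulVec (fun j => α * u j + v j)
        = α * (x₀ ⬝ᵥ G.mulVec u) + x₀ ⬝ᵥ G.mulVec v := by
      simp only [dotProduct, mulVec, Fin.sum_univ_three]
      ring
    rw [expand, hu, hv]; ring
  · have expand : (fun j => α * u j + v j) ⬝ᵥ G.mulVec (fun j => α * u j + v j)
        = α * α * Fu + α * (h + (v ⬝ᵥ G.mulVec u)) + Fv := by
      simp only [hFu_def, hFv_def, hh_def, dotProduct, mulVec, Fin.sum_univ_three]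
      ring
    rw [expand, hvu, hα_def]
    field_simp
    linear_combination (-(P.det * P.det)) * hs - m * hdetM

end TernaryQuadricAux

open TernaryQuadricAux Matrix

/-- A two-dimensional affine quadric with a rational point contains a rational
line if and only if the relevant discriminant is a square. -/
theorem ternary_quadric_contains_line_iff_square
    (q : MvPolynomial (Fin 3) ℤ) (hq : q.IsHomogeneous 2)
    (hnd : (quadGram q).det ≠ 0)
    (m : ℤ) (hm : m ≠ 0)
    (hrat : ∃ x : Fin 3 → ℚ, aeval x q = (m : ℚ)) :
    IsSquare (-(m : ℚ) * (quadGram q).det) ↔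
      ∃ a b : Fin 3 → ℚ, b ≠ 0 ∧
        ∀ t : ℚ, aeval (fun i => a i + t * b i) q = (m : ℚ) := by
  set G := quadGram q with hG_def
  have hG : ∀ i j, G i j = G j i := by
    intro i j
    by_cases hij : i = j
    · rw [hij]
    · simp only [hG_def, quadGram]
      rw [if_neg hij, if_neg (Ne.symm hij), add_comm]
  have hm' : (m : ℚ) ≠ 0 := Int.cast_ne_zero.mpr hm
  constructor
  · rintro ⟨s, hs⟩
    obtain ⟨x₀, hx₀⟩ := hrat
    rw [key q hq] at hx₀
    obtain ⟨i, hi⟩ : ∃ i, G.mulVec x₀ i ≠ 0 := by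
      by_contra hcon
      push_neg at hcon
      apply hm'
      rw [← hx₀]
      simp only [dotProduct, Fin.sum_univ_three, ← hG_def, hcon]
      ring
    have main : ∃ b : Fin 3 → ℚ, b ≠ 0 ∧ x₀ ⬝ᵥ G.mulVec b = 0 ∧ b ⬝ᵥ G.mulVec b = 0 := by
      fin_cases i
      · refine iso_vec G hG (m : ℚ) hm' x₀ hx₀ s hs
          ![G.mulVec x₀ 1, -(G.mulVec x₀ 0), 0] ![G.mulVec x₀ 2, 0, -(G.mulVec x₀ 0)]
          ?_ ?_ ?_ ?_
        · rw [bsym G hG]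
          simp only [dotProduct, Fin.sum_univ_three]
          simp
          ring
        · rw [bsym G hG]
          simp only [dotProduct, Fin.sum_univ_three]
          simp
          ring
        · intro hcon
          apply hi
          simpa using congrFun hcon 1
        · intro α hcon
          apply hi
          simpa using congrFun hcon 2
      · refine iso_vec G hG (m : ℚ) hm' x₀ hx₀ s hs
          ![-(G.mulVec x₀ 1), G.mulVec x₀ 0, 0] ![0, G.mulVec x₀ 2, -(G.mulVec x₀ 1)]
          ?_ ?_ ?_ ?_
        · rw [bsym G hG]
          simp only [dotProduct, Fin.sum_univ_three]
          simp
          ring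
        · rw [bsym G hG]
          simp only [dotProduct, Fin.sum_univ_three]
          simp
          ring
        · intro hcon
          apply hi
          simpa using congrFun hcon 0
        · intro α hcon
          apply hi
          simpa using congrFun hcon 2
      · refine iso_vec G hG (m : ℚ) hm' x₀ hx₀ s hs
          ![-(G.mulVec x₀ 2), 0, G.mulVec x₀ 0] ![0, -(G.mulVec x₀ 2), G.mulVec x₀ 1]
          ?_ ?_ ?_ ?_
        · rw [bsym G hG]
          simp only [dotProduct, Fin.sum_univ_three]
          simp
          ring
        · rw [bsym G hG]
          simp only [dotProduct, Fin.sum_univ_three]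
          simp
          ring
        · intro hcon
          apply hi
          simpa using congrFun hcon 0
        · intro α hcon
          apply hi
          simpa using congrFun hcon 1
    obtain ⟨b, hb0, hb1, hb2⟩ := main
    have hb1' : b ⬝ᵥ G.mulVec x₀ = 0 := by rw [bsym G hG]; exact hb1
    refine ⟨x₀, b, hb0, fun t => ?_⟩
    rw [key q hq]
    simp only [dotProduct, mulVec, Fin.sum_univ_three] at hx₀ hb1 hb1' hb2 ⊢
    linear_combination hx₀ + t * hb1 + t * hb1' + t^2 * hb2
  · rintro ⟨a, b, hb, hline⟩
    have ht : ∀ t : ℚ, (a ⬝ᵥ G.mulVec a) + t * (a ⬝ᵥ G.mulVec b) + t * (b ⬝ᵥ G.mulVec a)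
        + t^2 * (b ⬝ᵥ G.mulVec b) = m := by
      intro t
      have hl := hline t
      rw [key q hq] at hl
      simp only [dotProduct, mulVec, Fin.sum_univ_three] at hl ⊢
      linear_combination hl
    have hsym := bsym G hG a b
    have haa : a ⬝ᵥ G.mulVec a = m := by linear_combination ht 0
    have hbb : b ⬝ᵥ G.mulVec b = 0 := by linear_combination (ht 1)/2 + (ht (-1))/2 - ht 0
    have hab : a ⬝ᵥ G.mulVec b = 0 := by linear_combination (ht 1)/4 - (ht (-1))/4 + hsym/2
    exact square_of_line G hG hnd (m : ℚ) hm' a b hb haa hab hbb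
end

section
/- Plane sections of a ternary affine quadric with non-square discriminant are irreducible: for all a, u, v ∈ ℚ³ with u and v linearly independent over ℚ, the polynomial P(s,t) := q(a + s·u + t·v) − m ∈ ℚ[s,t] is either a nonzero constant, or has total degree 2 and is irreducible in ℚ[s,t]. -/
open MvPolynomial Matrix

set_option linter.unusedSectionVars false

noncomputable def expQ (qA qB qC qD qE qF : ℚ) : MvPolynomial (Fin 2) ℚ :=
  C qA * X 0 ^ 2 + C qB * (X 0 * X 1) + C qC * X 1 ^ 2 + C qD * X 0 + C qE * X 1 + C qF

section AuxDeg
variable {σ : Type*} {R : Type*} [CommRing R] [IsDomain R]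

lemma eq_C_of_totalDegree_eq_zero {p : MvPolynomial σ R} (h : p.totalDegree = 0) :
    p = C (p.coeff 0) := by
  classical
  ext d
  by_cases hd : d = 0
  · simp [hd]
  · rw [coeff_C, if_neg (Ne.symm hd)]
    by_contra hc
    have hmem : d ∈ p.support := by simpa [mem_support_iff] using hc
    have := (totalDegree_eq_zero_iff σ p).mp h d hmem
    exact hd (Finsupp.ext fun x => this x)

lemma degree_eq_sum (m : σ →₀ ℕ) : m.degree = m.sum fun _ e => e := rfl

lemma totalDegree_lt_of_sub_top {p : MvPolynomial σ R}
    (h : p - homogeneousComponent p.totalDegree p ≠ 0) :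
    (p - homogeneousComponent p.totalDegree p).totalDegree < p.totalDegree := by
  classical
  set d := p.totalDegree with hd
  set f := p - homogeneousComponent d p with hf
  have key : ∀ m ∈ f.support, (m.sum fun _ e => e) < d := by
    intro m hm
    rcases lt_or_ge (m.sum fun _ e => e) d with h1 | h1
    · exact h1
    · exfalso
      have hcm : coeff m f ≠ 0 := by simpa [mem_support_iff] using hm
      rw [hf, coeff_sub, coeff_homogeneousComponent, degree_eq_sum] at hcm
      rcases eq_or_lt_of_le h1 with h2 | h2
      · simp [← h2] at hcm
      · have hz : coeff m p = 0 := coeff_eq_zero_of_totalDegree_lt (by exact h2)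
        rw [hz, if_neg (by omega)] at hcm
        simp at hcm
  have hne : f.support.Nonempty := by
    rw [Finset.nonempty_iff_ne_empty]
    simpa [MvPolynomial.support_eq_empty] using h
  obtain ⟨m, hm, hmax⟩ := Finset.exists_mem_eq_sup f.support hne (fun s => s.sum fun _ e => e)
  rw [MvPolynomial.totalDegree, hmax]
  exact key m hm

lemma top_homogeneousComponent_ne_zero {p : MvPolynomial σ R} (hp : p ≠ 0) :
    homogeneousComponent p.totalDegree p ≠ 0 := by
  classical
  have hne : p.support.Nonempty := by
    rw [Finset.nonempty_iff_ne_empty]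
    simpa [MvPolynomial.support_eq_empty] using hp
  obtain ⟨m, hm, hmax⟩ := Finset.exists_mem_eq_sup p.support hne (fun s => s.sum fun _ e => e)
  intro h0
  have : coeff m (homogeneousComponent p.totalDegree p) = coeff m p := by
    rw [coeff_homogeneousComponent, degree_eq_sum, if_pos]
    rw [MvPolynomial.totalDegree, hmax]
  rw [h0] at this
  exact (by simpa [mem_support_iff] using hm : coeff m p ≠ 0) (by simpa using this.symm)

lemma totalDegree_mul_eq {f g : MvPolynomial σ R} (hf : f ≠ 0) (hg : g ≠ 0) :
    (f * g).totalDegree = f.totalDegree + g.totalDegree := by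
  classical
  refine le_antisymm (totalDegree_mul f g) ?_
  set a := f.totalDegree with ha
  set b := g.totalDegree with hb
  set f1 := homogeneousComponent a f with hf1
  set g1 := homogeneousComponent b g with hg1
  have hf1h : f1.IsHomogeneous a := homogeneousComponent_isHomogeneous a f
  have hg1h : g1.IsHomogeneous b := homogeneousComponent_isHomogeneous b g
  have hf1ne : f1 ≠ 0 := top_homogeneousComponent_ne_zero hf
  have hg1ne : g1 ≠ 0 := top_homogeneousComponent_ne_zero hg
  have hprodne : f1 * g1 ≠ 0 := mul_ne_zero hf1ne hg1ne
  have hprodh : (f1 * g1).IsHomogeneous (a + b) := hf1h.mul hg1h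
  set r := f * g - f1 * g1 with hr
  have hrdeg : r = 0 ∨ r.totalDegree < a + b := by
    by_cases h2 : r = 0
    · exact Or.inl h2
    · right
      set f2 := f - f1 with hf2
      set g2 := g - g1 with hg2
      have hrw : r = f1 * g2 + f2 * g1 + f2 * g2 := by rw [hr, hf2, hg2]; ring
      have bf1 : f1.totalDegree ≤ a := hf1h.totalDegree_le
      have bg1 : g1.totalDegree ≤ b := hg1h.totalDegree_le
      have hf2lt : f2 ≠ 0 → f2.totalDegree < a := fun h3 =>
        totalDegree_lt_of_sub_top (p := f) h3
      have hg2lt : g2 ≠ 0 → g2.totalDegree < b := fun h3 =>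
        totalDegree_lt_of_sub_top (p := g) h3
      have hb1 : (f1 * g2).totalDegree < a + b ∨ f1 * g2 = 0 := by
        by_cases h3 : g2 = 0
        · exact Or.inr (by rw [h3, mul_zero])
        · left
          calc (f1 * g2).totalDegree ≤ f1.totalDegree + g2.totalDegree := totalDegree_mul _ _
          _ < a + b := by have := hg2lt h3; omega
      have hb2 : (f2 * g1).totalDegree < a + b ∨ f2 * g1 = 0 := by
        by_cases h3 : f2 = 0
        · exact Or.inr (by rw [h3, zero_mul])
        · left
          calc (f2 * g1).totalDegree ≤ f2.totalDegree + g1.totalDegree := totalDegree_mul _ _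
          _ < a + b := by have := hf2lt h3; omega
      have hb3 : (f2 * g2).totalDegree < a + b ∨ f2 * g2 = 0 := by
        by_cases h3 : f2 = 0
        · exact Or.inr (by rw [h3, zero_mul])
        by_cases h4 : g2 = 0
        · exact Or.inr (by rw [h4, mul_zero])
        left
        calc (f2 * g2).totalDegree ≤ f2.totalDegree + g2.totalDegree := totalDegree_mul _ _
        _ < a + b := by
            have h5 := hf2lt h3
            have h6 := hg2lt h4
            omega
      rw [hrw]
      have step : ∀ x y : MvPolynomial σ R, (x.totalDegree < a + b ∨ x = 0) →
          (y.totalDegree < a + b ∨ y = 0) → ((x + y).totalDegree < a + b ∨ x + y = 0) := by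
        rintro x y (hx | hx) (hy | hy)
        · left; exact lt_of_le_of_lt (totalDegree_add x y) (max_lt hx hy)
        · subst hy; simpa using Or.inl hx
        · subst hx; simpa using Or.inl hy
        · subst hx; subst hy; simp
      rcases step _ _ (step _ _ hb1 hb2) hb3 with h | h
      · exact h
      · exact absurd (hrw.trans h) h2
  -- now find witness monomial
  have hdeg : (f1 * g1).totalDegree = a + b := hprodh.totalDegree hprodne
  have hne2 : (f1 * g1).support.Nonempty := by
    rw [Finset.nonempty_iff_ne_empty]
    simpa [MvPolynomial.support_eq_empty] using hprodne
  obtain ⟨m, hm, hmax⟩ := Finset.exists_mem_eq_sup (f1 * g1).support hne2 (fun s => s.sum fun _ e => e)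
  have hmdeg : (m.sum fun _ e => e) = a + b := by rw [← hdeg, MvPolynomial.totalDegree, hmax]
  have hcr : coeff m r = 0 := by
    rcases hrdeg with h | h
    · rw [h, coeff_zero]
    · refine coeff_eq_zero_of_totalDegree_lt ?_
      have : (m.sum fun _ e => e) = ∑ i ∈ m.support, m i := rfl
      omega
  have hcoeff : coeff m (f * g) ≠ 0 := by
    have : coeff m (f * g) = coeff m (f1 * g1) + coeff m r := by rw [hr, coeff_sub]; ring
    rw [this, hcr, add_zero]
    simpa [mem_support_iff] using hm
  calc a + b = m.sum fun _ e => e := hmdeg.symm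
  _ ≤ (f * g).totalDegree := le_totalDegree (mem_support_iff.mpr hcoeff)
end AuxDeg

lemma finsupp_sum_fin3 (d : Fin 3 →₀ ℕ) : (d.sum fun _ e => e) = d 0 + d 1 + d 2 := by
  rw [Finsupp.sum_fintype _ _ (fun _ => rfl), Fin.sum_univ_three]

lemma finsupp_sum_fin2 (d : Fin 2 →₀ ℕ) : (d.sum fun _ e => e) = d 0 + d 1 := by
  rw [Finsupp.sum_fintype _ _ (fun _ => rfl), Fin.sum_univ_two]

lemma finsupp_fin3_eq (d : Fin 3 →₀ ℕ) (x y z : ℕ) (hx : d 0 = x) (hy : d 1 = y) (hz : d 2 = z) :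
    d = Finsupp.single 0 x + Finsupp.single 1 y + Finsupp.single 2 z := by
  ext i
  fin_cases i <;> simp [Finsupp.single_apply, ← hx, ← hy, ← hz]

lemma fin3_classify (d : Fin 3 →₀ ℕ) (h : d 0 + d 1 + d 2 = 2) :
    d = Finsupp.single 0 2 ∨ d = Finsupp.single 1 2 ∨ d = Finsupp.single 2 2 ∨
    d = Finsupp.single 0 1 + Finsupp.single 1 1 ∨
    d = Finsupp.single 0 1 + Finsupp.single 2 1 ∨
    d = Finsupp.single 1 1 + Finsupp.single 2 1 := by
  have hcase : (d 0 = 2 ∧ d 1 = 0 ∧ d 2 = 0) ∨ (d 0 = 0 ∧ d 1 = 2 ∧ d 2 = 0) ∨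
      (d 0 = 0 ∧ d 1 = 0 ∧ d 2 = 2) ∨ (d 0 = 1 ∧ d 1 = 1 ∧ d 2 = 0) ∨
      (d 0 = 1 ∧ d 1 = 0 ∧ d 2 = 1) ∨ (d 0 = 0 ∧ d 1 = 1 ∧ d 2 = 1) := by omega
  rcases hcase with ⟨hx, hy, hz⟩ | ⟨hx, hy, hz⟩ | ⟨hx, hy, hz⟩ | ⟨hx, hy, hz⟩ | ⟨hx, hy, hz⟩ | ⟨hx, hy, hz⟩ <;>
    rw [finsupp_fin3_eq d _ _ _ hx hy hz] <;> simp

lemma fin2_classify (d : Fin 2 →₀ ℕ) (h : d 0 + d 1 ≤ 1) :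
    d = 0 ∨ d = Finsupp.single 0 1 ∨ d = Finsupp.single 1 1 := by
  have key : ∀ x y : ℕ, d 0 = x → d 1 = y → d = Finsupp.single 0 x + Finsupp.single 1 y := by
    intro x y hx hy
    ext i
    fin_cases i <;> simp [Finsupp.single_apply, ← hx, ← hy]
  have hcase : (d 0 = 0 ∧ d 1 = 0) ∨ (d 0 = 1 ∧ d 1 = 0) ∨ (d 0 = 0 ∧ d 1 = 1) := by omega
  rcases hcase with ⟨hx, hy⟩ | ⟨hx, hy⟩ | ⟨hx, hy⟩ <;> rw [key _ _ hx hy] <;> simp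




lemma q_decomp (q : MvPolynomial (Fin 3) ℤ) (hq : q.IsHomogeneous 2) :
    q = monomial (Finsupp.single 0 2) (coeff (Finsupp.single 0 2) q)
      + monomial (Finsupp.single 1 2) (coeff (Finsupp.single 1 2) q)
      + monomial (Finsupp.single 2 2) (coeff (Finsupp.single 2 2) q)
      + monomial (Finsupp.single 0 1 + Finsupp.single 1 1) (coeff (Finsupp.single 0 1 + Finsupp.single 1 1) q)
      + monomial (Finsupp.single 0 1 + Finsupp.single 2 1) (coeff (Finsupp.single 0 1 + Finsupp.single 2 1) q)
      + monomial (Finsupp.single 1 1 + Finsupp.single 2 1) (coeff (Finsupp.single 1 1 + Finsupp.single 2 1) q) := by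
  ext d
  simp only [coeff_add, coeff_monomial]
  by_cases hsum : d 0 + d 1 + d 2 = 2
  · rcases fin3_classify d hsum with h | h | h | h | h | h <;> subst h <;>
      norm_num [Finsupp.ext_iff, Fin.forall_fin_succ, Finsupp.single_apply,
        show (2:Fin 3) ≠ 0 by decide, show (0:Fin 3) ≠ 2 by decide, show (2:Fin 3) ≠ 1 by decide,
        show (1:Fin 3) ≠ 2 by decide, show (0:Fin 3) ≠ 1 by decide, show (1:Fin 3) ≠ 0 by decide]
  · have hz : coeff d q = 0 := by
      apply hq.coeff_eq_zero
      rw [show d.degree = d.sum fun _ e => e from rfl, finsupp_sum_fin3]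
      omega
    rw [hz]
    have h1 : d ≠ Finsupp.single 0 2 := fun h => hsum (by subst h; simp [Finsupp.single_apply])
    have h2 : d ≠ Finsupp.single 1 2 := fun h => hsum (by subst h; simp [Finsupp.single_apply])
    have h3 : d ≠ Finsupp.single 2 2 := fun h => hsum (by subst h; simp [Finsupp.single_apply])
    have h4 : d ≠ Finsupp.single 0 1 + Finsupp.single 1 1 := fun h => hsum (by subst h; simp [Finsupp.single_apply])
    have h5 : d ≠ Finsupp.single 0 1 + Finsupp.single 2 1 := fun h => hsum (by subst h; simp [Finsupp.single_apply])
    have h6 : d ≠ Finsupp.single 1 1 + Finsupp.single 2 1 := fun h => hsum (by subst h; simp [Finsupp.single_apply])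
    simp [Ne.symm h1, Ne.symm h2, Ne.symm h3, Ne.symm h4, Ne.symm h5, Ne.symm h6]

lemma dot_symm (G : Matrix (Fin 3) (Fin 3) ℚ) (hs : ∀ i j, G i j = G j i)
    (x y : Fin 3 → ℚ) : x ⬝ᵥ G *ᵥ y = y ⬝ᵥ G *ᵥ x := by
  simp only [Matrix.mulVec, dotProduct, Fin.sum_univ_three]
  linear_combination (x 0 * y 1 - x 1 * y 0) * hs 0 1 + (x 0 * y 2 - x 2 * y 0) * hs 0 2
    + (x 1 * y 2 - x 2 * y 1) * hs 1 2

lemma entry_lemma (M G : Matrix (Fin 3) (Fin 3) ℚ) (i j : Fin 3) :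
    (M * G * Mᵀ) i j = (M i) ⬝ᵥ G *ᵥ (M j) := by
  simp only [Matrix.mul_apply, Matrix.mulVec, dotProduct, Fin.sum_univ_three,
    Matrix.transpose_apply]
  ring

lemma key_lemma (G : Matrix (Fin 3) (Fin 3) ℚ) (hs : ∀ i j, G i j = G j i)
    (hdet : G.det ≠ 0) (m : ℚ) (hm : m ≠ 0) (p w : Fin 3 → ℚ) (hw : w ≠ 0)
    (hpp : p ⬝ᵥ G *ᵥ p = m) (hpw : p ⬝ᵥ G *ᵥ w = 0) (hww : w ⬝ᵥ G *ᵥ w = 0) :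
    IsSquare (-m * G.det) := by
  -- p, w are linearly independent
  have hli : LinearIndependent ℚ ![p, w] := by
    rw [LinearIndependent.pair_iff]
    intro s t hst
    have h1 : (s • p + t • w) ⬝ᵥ G *ᵥ p = 0 := by rw [hst]; simp
    have h2 : (s • p + t • w) ⬝ᵥ G *ᵥ p = s * (p ⬝ᵥ G *ᵥ p) + t * (w ⬝ᵥ G *ᵥ p) := by
      rw [add_dotProduct, smul_dotProduct, smul_dotProduct]; simp [smul_eq_mul]
    have hwp : w ⬝ᵥ G *ᵥ p = 0 := by rw [dot_symm G hs]; exact hpw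
    rw [h2, hpp, hwp] at h1
    have hs0 : s = 0 := by
      have h3 : s * m = 0 := by linarith [h1]
      rcases mul_eq_zero.mp h3 with h | h
      · exact h
      · exact absurd h hm
    refine ⟨hs0, ?_⟩
    rw [hs0] at hst
    simp at hst
    rcases hst with h | h
    · exact h
    · exact absurd h hw
  set z := crossProduct p w with hz
  have hzne : z ≠ 0 := crossProduct_ne_zero_iff_linearIndependent.mpr hli
  set M : Matrix (Fin 3) (Fin 3) ℚ := ![p, w, z] with hM
  have hdetM : M.det = z ⬝ᵥ z := by
    rw [hM, ← triple_product_eq_det]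
    rw [show p ⬝ᵥ w ⨯₃ z = w ⬝ᵥ z ⨯₃ p from triple_product_permutation p w z,
      show w ⬝ᵥ z ⨯₃ p = z ⬝ᵥ p ⨯₃ w from triple_product_permutation w z p]
  have hdetMne : M.det ≠ 0 := by
    rw [hdetM]
    exact fun h => hzne (dotProduct_self_eq_zero.mp h)
  set N := M * G * Mᵀ with hN
  have hdetN : N.det = M.det ^ 2 * G.det := by
    rw [hN, Matrix.det_mul, Matrix.det_mul, Matrix.det_transpose]; ring
  have e00 : N 0 0 = m := by rw [hN, entry_lemma]; exact hpp
  have e01 : N 0 1 = 0 := by rw [hN, entry_lemma]; exact hpw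
  have e10 : N 1 0 = 0 := by rw [hN, entry_lemma, dot_symm G hs]; exact hpw
  have e11 : N 1 1 = 0 := by rw [hN, entry_lemma]; exact hww
  have e21 : N 2 1 = N 1 2 := by rw [hN, entry_lemma, entry_lemma, dot_symm G hs]
  have hdetN2 : N.det = -m * (N 1 2) ^ 2 := by
    rw [det_fin_three, e00, e01, e10, e11, e21]; ring
  have hkey : M.det ^ 2 * G.det = -m * (N 1 2) ^ 2 := by rw [← hdetN, hdetN2]
  have hN12 : N 1 2 ≠ 0 := by
    intro h
    rw [h] at hkey
    simp at hkey
    rcases hkey with h' | h' <;> [exact hdetMne h'; exact hdet h']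
  obtain ⟨n, hn⟩ : ∃ x, x = N 1 2 := ⟨_, rfl⟩
  rw [← hn] at hkey hN12
  refine ⟨M.det * G.det / n, ?_⟩
  rw [div_mul_div_comm, eq_div_iff (mul_ne_zero hN12 hN12)]
  linear_combination (-G.det) * hkey
lemma quadGram_symm {n : ℕ} (q : MvPolynomial (Fin n) ℤ) (i j : Fin n) :
    quadGram q i j = quadGram q j i := by
  unfold quadGram
  rcases eq_or_ne i j with h | h
  · rw [h]
  · rw [if_neg h, if_neg (Ne.symm h), add_comm]

section
variable (q : MvPolynomial (Fin 3) ℤ)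

lemma gram00 : quadGram q 0 0 = ((coeff (Finsupp.single 0 2) q : ℤ) : ℚ) := by simp [quadGram]
lemma gram11 : quadGram q 1 1 = ((coeff (Finsupp.single 1 2) q : ℤ) : ℚ) := by simp [quadGram]
lemma gram22 : quadGram q 2 2 = ((coeff (Finsupp.single 2 2) q : ℤ) : ℚ) := by simp [quadGram]
lemma gram01 : quadGram q 0 1 = ((coeff (Finsupp.single 0 1 + Finsupp.single 1 1) q : ℤ) : ℚ) / 2 := by
  simp [quadGram]
lemma gram02 : quadGram q 0 2 = ((coeff (Finsupp.single 0 1 + Finsupp.single 2 1) q : ℤ) : ℚ) / 2 := by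
  simp [quadGram]
lemma gram12 : quadGram q 1 2 = ((coeff (Finsupp.single 1 1 + Finsupp.single 2 1) q : ℤ) : ℚ) / 2 := by
  simp [quadGram]
lemma gram10 : quadGram q 1 0 = quadGram q 0 1 := quadGram_symm q 1 0
lemma gram20 : quadGram q 2 0 = quadGram q 0 2 := quadGram_symm q 2 0
lemma gram21 : quadGram q 2 1 = quadGram q 1 2 := quadGram_symm q 2 1

lemma dot_diag (x : Fin 3 → ℚ) :
    x ⬝ᵥ (quadGram q) *ᵥ x
      = ((coeff (Finsupp.single 0 2) q : ℤ) : ℚ) * x 0 ^ 2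
      + ((coeff (Finsupp.single 1 2) q : ℤ) : ℚ) * x 1 ^ 2
      + ((coeff (Finsupp.single 2 2) q : ℤ) : ℚ) * x 2 ^ 2
      + ((coeff (Finsupp.single 0 1 + Finsupp.single 1 1) q : ℤ) : ℚ) * (x 0 * x 1)
      + ((coeff (Finsupp.single 0 1 + Finsupp.single 2 1) q : ℤ) : ℚ) * (x 0 * x 2)
      + ((coeff (Finsupp.single 1 1 + Finsupp.single 2 1) q : ℤ) : ℚ) * (x 1 * x 2) := by
  simp only [Matrix.mulVec, dotProduct, Fin.sum_univ_three, gram00, gram11, gram22,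
    gram01, gram02, gram12, gram10, gram20, gram21]
  ring

lemma dot_off (x y : Fin 3 → ℚ) :
    2 * (x ⬝ᵥ (quadGram q) *ᵥ y)
      = ((coeff (Finsupp.single 0 2) q : ℤ) : ℚ) * (2 * x 0 * y 0)
      + ((coeff (Finsupp.single 1 2) q : ℤ) : ℚ) * (2 * x 1 * y 1)
      + ((coeff (Finsupp.single 2 2) q : ℤ) : ℚ) * (2 * x 2 * y 2)
      + ((coeff (Finsupp.single 0 1 + Finsupp.single 1 1) q : ℤ) : ℚ) * (x 0 * y 1 + x 1 * y 0)
      + ((coeff (Finsupp.single 0 1 + Finsupp.single 2 1) q : ℤ) : ℚ) * (x 0 * y 2 + x 2 * y 0)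
      + ((coeff (Finsupp.single 1 1 + Finsupp.single 2 1) q : ℤ) : ℚ) * (x 1 * y 2 + x 2 * y 1) := by
  simp only [Matrix.mulVec, dotProduct, Fin.sum_univ_three, gram00, gram11, gram22,
    gram01, gram02, gram12, gram10, gram20, gram21]
  ring

lemma subst_form (hq : q.IsHomogeneous 2) (m : ℤ) (a u v : Fin 3 → ℚ) :
    aeval (fun i : Fin 3 => C (a i) + C (u i) * X 0 + C (v i) * X 1) q - C (m : ℚ)
      = expQ (u ⬝ᵥ (quadGram q) *ᵥ u) (2 * (u ⬝ᵥ (quadGram q) *ᵥ v)) (v ⬝ᵥ (quadGram q) *ᵥ v)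
          (2 * (a ⬝ᵥ (quadGram q) *ᵥ u)) (2 * (a ⬝ᵥ (quadGram q) *ᵥ v))
          (a ⬝ᵥ (quadGram q) *ᵥ a - (m : ℚ)) := by
  rw [expQ, show a ⬝ᵥ (quadGram q) *ᵥ a - (m:ℚ) = a ⬝ᵥ (quadGram q) *ᵥ a + (-(m:ℚ)) by ring,
    dot_off, dot_off, dot_off, dot_diag, dot_diag, dot_diag]
  conv_lhs => rw [q_decomp q hq]
  simp only [map_add, aeval_monomial, algebraMap_int_eq, eq_intCast]
  rw [Finsupp.prod_add_index' (fun i => pow_zero _) (fun i a b => pow_add _ a b),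
    Finsupp.prod_add_index' (fun i => pow_zero _) (fun i a b => pow_add _ a b),
    Finsupp.prod_add_index' (fun i => pow_zero _) (fun i a b => pow_add _ a b)]
  simp only [Finsupp.prod_single_index, pow_zero, _root_.map_add, _root_.map_mul, map_pow,
    map_intCast, map_neg, map_ofNat, _root_.map_one]
  set_option maxHeartbeats 1000000 in ring




lemma X_mul_X' : (X 0 : MvPolynomial (Fin 2) ℚ) * X 1
    = monomial (Finsupp.single 0 1 + Finsupp.single 1 1) 1 := by
  rw [show (X 0 : MvPolynomial (Fin 2) ℚ) = monomial (Finsupp.single 0 1) 1 from rfl,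
      show (X 1 : MvPolynomial (Fin 2) ℚ) = monomial (Finsupp.single 1 1) 1 from rfl,
      monomial_mul, one_mul]

lemma expQ_monomial (qA qB qC qD qE qF : ℚ) :
    expQ qA qB qC qD qE qF
      = monomial (Finsupp.single 0 2) qA + monomial (Finsupp.single 0 1 + Finsupp.single 1 1) qB
      + monomial (Finsupp.single 1 2) qC + monomial (Finsupp.single 0 1) qD
      + monomial (Finsupp.single 1 1) qE + monomial 0 qF := by
  unfold expQ
  rw [X_pow_eq_monomial, X_pow_eq_monomial, X_mul_X',
    show (X 0 : MvPolynomial (Fin 2) ℚ) = monomial (Finsupp.single 0 1) 1 from rfl,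
    show (X 1 : MvPolynomial (Fin 2) ℚ) = monomial (Finsupp.single 1 1) 1 from rfl,
    C_mul_monomial, C_mul_monomial, C_mul_monomial, C_mul_monomial, C_mul_monomial, C_apply]
  simp only [mul_one]

lemma expQ_coeff20 (qA qB qC qD qE qF : ℚ) :
    coeff (Finsupp.single 0 2) (expQ qA qB qC qD qE qF) = qA := by
  rw [expQ_monomial]
  simp [coeff_monomial, coeff_add, Finsupp.ext_iff, Fin.forall_fin_succ, Finsupp.single_apply]

lemma expQ_coeff11 (qA qB qC qD qE qF : ℚ) :
    coeff (Finsupp.single 0 1 + Finsupp.single 1 1) (expQ qA qB qC qD qE qF) = qB := by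
  rw [expQ_monomial]
  simp [coeff_monomial, coeff_add, Finsupp.ext_iff, Fin.forall_fin_succ, Finsupp.single_apply]

lemma expQ_coeff02 (qA qB qC qD qE qF : ℚ) :
    coeff (Finsupp.single 1 2) (expQ qA qB qC qD qE qF) = qC := by
  rw [expQ_monomial]
  simp [coeff_monomial, coeff_add, Finsupp.ext_iff, Fin.forall_fin_succ, Finsupp.single_apply]

lemma expQ_coeff10 (qA qB qC qD qE qF : ℚ) :
    coeff (Finsupp.single 0 1) (expQ qA qB qC qD qE qF) = qD := by
  rw [expQ_monomial]
  simp [coeff_monomial, coeff_add, Finsupp.ext_iff, Fin.forall_fin_succ, Finsupp.single_apply]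

lemma expQ_coeff01 (qA qB qC qD qE qF : ℚ) :
    coeff (Finsupp.single 1 1) (expQ qA qB qC qD qE qF) = qE := by
  rw [expQ_monomial]
  simp [coeff_monomial, coeff_add, Finsupp.ext_iff, Fin.forall_fin_succ, Finsupp.single_apply]

lemma expQ_coeff00 (qA qB qC qD qE qF : ℚ) :
    coeff 0 (expQ qA qB qC qD qE qF) = qF := by
  rw [expQ_monomial]
  simp [coeff_monomial, coeff_add, Finsupp.ext_iff, Fin.forall_fin_succ, Finsupp.single_apply]

lemma expQ_totalDegree_le (qA qB qC qD qE qF : ℚ) :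
    (expQ qA qB qC qD qE qF).totalDegree ≤ 2 := by
  unfold expQ
  refine le_trans (totalDegree_add _ _) (max_le (le_trans (totalDegree_add _ _) (max_le
    (le_trans (totalDegree_add _ _) (max_le (le_trans (totalDegree_add _ _) (max_le
    (le_trans (totalDegree_add _ _) (max_le ?_ ?_)) ?_)) ?_)) ?_)) ?_)
  · refine le_trans (totalDegree_mul _ _) ?_
    simp [totalDegree_X_pow]
  · refine le_trans (totalDegree_mul _ _) ?_
    refine le_trans (add_le_add le_rfl (totalDegree_mul _ _)) ?_
    simp [totalDegree_X]
  · refine le_trans (totalDegree_mul _ _) ?_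
    simp [totalDegree_X_pow]
  · refine le_trans (totalDegree_mul _ _) ?_
    simp [totalDegree_X]
  · refine le_trans (totalDegree_mul _ _) ?_
    simp [totalDegree_X]
  · simp
lemma expQ_eval (qA qB qC qD qE qF s t : ℚ) :
    eval ![s, t] (expQ qA qB qC qD qE qF)
      = qA * s ^ 2 + qB * s * t + qC * t ^ 2 + qD * s + qE * t + qF := by
  unfold expQ
  simp [eval_C, eval_X]
  ring

lemma rep_deg_le_one (p : MvPolynomial (Fin 2) ℚ) (h : p.totalDegree ≤ 1) :
    p = expQ 0 0 0 (coeff (Finsupp.single 0 1) p) (coeff (Finsupp.single 1 1) p) (coeff 0 p) := by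
  ext d
  by_cases hd : d 0 + d 1 ≤ 1
  · rcases fin2_classify d hd with h0 | h0 | h0 <;> subst h0 <;>
      simp [expQ_coeff00, expQ_coeff10, expQ_coeff01]
  · have hz : coeff d p = 0 := by
      apply coeff_eq_zero_of_totalDegree_lt
      rw [show (∑ i ∈ d.support, d i) = d.sum fun _ e => e from rfl, finsupp_sum_fin2]
      omega
    rw [hz, expQ_monomial]
    have h4 : d ≠ Finsupp.single 0 1 := fun h' => hd (by subst h'; simp [Finsupp.single_apply])
    have h5 : d ≠ Finsupp.single 1 1 := fun h' => hd (by subst h'; simp [Finsupp.single_apply])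
    have h6 : d ≠ 0 := fun h' => hd (by subst h'; simp)
    simp [coeff_monomial, Ne.symm h4, Ne.symm h5, Ne.symm h6]
-- main theorem part (appended); assumes all aux lemmas

/-- Plane sections of a ternary affine quadric with non-square discriminant
are irreducible. -/
theorem plane_sections_irreducible
    (q : MvPolynomial (Fin 3) ℤ) (hq : q.IsHomogeneous 2)
    (hnd : (quadGram q).det ≠ 0)
    (m : ℤ) (hm : m ≠ 0)
    (hsq : ¬ IsSquare (-(m : ℚ) * (quadGram q).det))
    (hrat : ∃ x : Fin 3 → ℚ, aeval x q = (m : ℚ)) :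
    ∀ a u v : Fin 3 → ℚ, LinearIndependent ℚ ![u, v] →
      (let P : MvPolynomial (Fin 2) ℚ :=
        aeval (fun i : Fin 3 =>
          C (a i) + C (u i) * X 0 + C (v i) * X 1) q - C (m : ℚ);
      (P ≠ 0 ∧ P.totalDegree = 0) ∨ (P.totalDegree = 2 ∧ Irreducible P)) := by
  intro a u v hli
  intro P
  have hm' : (m : ℚ) ≠ 0 := Int.cast_ne_zero.mpr hm
  have hPform : P = expQ (u ⬝ᵥ (quadGram q) *ᵥ u) (2 * (u ⬝ᵥ (quadGram q) *ᵥ v))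
      (v ⬝ᵥ (quadGram q) *ᵥ v) (2 * (a ⬝ᵥ (quadGram q) *ᵥ u)) (2 * (a ⬝ᵥ (quadGram q) *ᵥ v))
      (a ⬝ᵥ (quadGram q) *ᵥ a - (m : ℚ)) := subst_form q hq m a u v
  have hG3 : ∀ s t : ℚ,
      ((fun i => a i + s * u i + t * v i) ⬝ᵥ quadGram q *ᵥ (fun i => a i + s * u i + t * v i))
        = (u ⬝ᵥ (quadGram q) *ᵥ u) * s ^ 2 + (2 * (u ⬝ᵥ (quadGram q) *ᵥ v)) * (s * t)
          + (v ⬝ᵥ (quadGram q) *ᵥ v) * t ^ 2 + (2 * (a ⬝ᵥ (quadGram q) *ᵥ u)) * s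
          + (2 * (a ⬝ᵥ (quadGram q) *ᵥ v)) * t + (a ⬝ᵥ (quadGram q) *ᵥ a) := by
    intro s t
    simp only [Matrix.mulVec, dotProduct, Fin.sum_univ_three, gram10 q, gram20 q, gram21 q]
    ring
  have CONTRA : ∀ s₀ t₀ α β : ℚ, ¬(α = 0 ∧ β = 0) →
      (∀ r : ℚ, ((fun i => a i + (s₀ + α * r) * u i + (t₀ + β * r) * v i) ⬝ᵥ quadGram q *ᵥ
        (fun i => a i + (s₀ + α * r) * u i + (t₀ + β * r) * v i)) = (m : ℚ)) → False := by
    intro s₀ t₀ α β hαβ hval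
    set p : Fin 3 → ℚ := fun i => a i + s₀ * u i + t₀ * v i with hp
    set w : Fin 3 → ℚ := fun i => α * u i + β * v i with hw
    have hwne : w ≠ 0 := by
      intro h0
      have h1 : α • u + β • v = 0 := by
        funext i
        have := congrFun h0 i
        simpa [hw, smul_eq_mul] using this
      obtain ⟨hα, hβ⟩ := (LinearIndependent.pair_iff.mp hli) α β h1
      exact hαβ ⟨hα, hβ⟩
    have hQr : ∀ r : ℚ, ((fun i => p i + r * w i) ⬝ᵥ quadGram q *ᵥ (fun i => p i + r * w i))
        = (m : ℚ) := by
      intro r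
      have hv : (fun i => p i + r * w i)
          = (fun i => a i + (s₀ + α * r) * u i + (t₀ + β * r) * v i) := by
        funext i; simp only [hp, hw]; ring
      rw [hv]; exact hval r
    have hexp : ∀ r : ℚ, ((fun i => p i + r * w i) ⬝ᵥ quadGram q *ᵥ (fun i => p i + r * w i))
        = (p ⬝ᵥ quadGram q *ᵥ p) + 2 * r * (p ⬝ᵥ quadGram q *ᵥ w)
          + r ^ 2 * (w ⬝ᵥ quadGram q *ᵥ w) := by
      intro r
      simp only [Matrix.mulVec, dotProduct, Fin.sum_univ_three, gram10 q, gram20 q, gram21 q]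
      ring
    have h0 := hQr 0; rw [hexp 0] at h0
    have h1 := hQr 1; rw [hexp 1] at h1
    have h2 := hQr (-1); rw [hexp (-1)] at h2
    have hpp : p ⬝ᵥ quadGram q *ᵥ p = (m : ℚ) := by nlinarith [h0]
    have hww : w ⬝ᵥ quadGram q *ᵥ w = 0 := by nlinarith [h0, h1, h2]
    have hpw : p ⬝ᵥ quadGram q *ᵥ w = 0 := by nlinarith [h0, h1, h2]
    exact hsq (key_lemma (quadGram q) (quadGram_symm q) hnd (m : ℚ) hm' p w hwne hpp hpw hww)
  set A := u ⬝ᵥ (quadGram q) *ᵥ u with hA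
  set B := 2 * (u ⬝ᵥ (quadGram q) *ᵥ v) with hB
  set Cc := v ⬝ᵥ (quadGram q) *ᵥ v with hC
  set D := 2 * (a ⬝ᵥ (quadGram q) *ᵥ u) with hD
  set E := 2 * (a ⬝ᵥ (quadGram q) *ᵥ v) with hE
  set Fq := a ⬝ᵥ (quadGram q) *ᵥ a with hFq
  by_cases hquad : A = 0 ∧ B = 0 ∧ Cc = 0
  · obtain ⟨hA0, hB0, hC0⟩ := hquad
    by_cases hDE : D = 0 ∧ E = 0
    · by_cases hF0 : Fq - (m : ℚ) = 0
      · exfalso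
        apply CONTRA 0 0 1 0 (by simp)
        intro r
        rw [hG3 (0 + 1 * r) (0 + 0 * r)]
        rw [hA0, hB0, hC0, hDE.1, hDE.2]
        have : Fq = (m : ℚ) := by linarith [hF0]
        rw [this]; ring
      · left
        constructor
        · intro hP0
          rw [hP0] at hPform
          have := expQ_coeff00 A B Cc D E (Fq - (m : ℚ))
          rw [← hPform] at this
          simp at this
          exact hF0 this.symm
        · rw [hPform, hA0, hB0, hC0, hDE.1, hDE.2]
          rw [show expQ 0 0 0 0 0 (Fq - (m:ℚ)) = C (Fq - (m:ℚ)) by unfold expQ; simp]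
          exact totalDegree_C _
    · exfalso
      have hpoint : ∃ s₀ t₀ : ℚ, D * s₀ + E * t₀ + (Fq - (m : ℚ)) = 0 := by
        by_cases hD0 : D = 0
        · have hE0 : E ≠ 0 := by tauto
          exact ⟨0, -(Fq - (m:ℚ)) / E, by field_simp; try ring⟩
        · exact ⟨-(Fq - (m:ℚ)) / D, 0, by field_simp; try ring⟩
      obtain ⟨s₀, t₀, hst⟩ := hpoint
      apply CONTRA s₀ t₀ E (-D) (by intro h; exact hDE ⟨by linarith [h.2], h.1⟩)
      intro r
      rw [hG3 (s₀ + E * r) (t₀ + -D * r), hA0, hB0, hC0]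
      linear_combination hst
  · right
    have hdeg : P.totalDegree = 2 := by
      refine le_antisymm (by rw [hPform]; exact expQ_totalDegree_le _ _ _ _ _ _) ?_
      have hsum20 : ((Finsupp.single 0 2 : Fin 2 →₀ ℕ).sum fun _ e => e) = 2 := by
        rw [finsupp_sum_fin2]; simp [Finsupp.single_apply]
      have hsum11 : (((Finsupp.single 0 1 + Finsupp.single 1 1) : Fin 2 →₀ ℕ).sum fun _ e => e) = 2 := by
        rw [finsupp_sum_fin2]; simp [Finsupp.single_apply]
      have hsum02 : ((Finsupp.single 1 2 : Fin 2 →₀ ℕ).sum fun _ e => e) = 2 := by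
        rw [finsupp_sum_fin2]; simp [Finsupp.single_apply]
      rcases not_and_or.mp hquad with h | h'
      · have : coeff (Finsupp.single 0 2) P ≠ 0 := by
          rw [hPform, expQ_coeff20]; exact h
        calc (2:ℕ) = (Finsupp.single 0 2 : Fin 2 →₀ ℕ).sum fun _ e => e := hsum20.symm
        _ ≤ P.totalDegree := le_totalDegree (mem_support_iff.mpr this)
      rcases not_and_or.mp h' with h | h
      · have : coeff (Finsupp.single 0 1 + Finsupp.single 1 1) P ≠ 0 := by
          rw [hPform, expQ_coeff11]; exact h
        calc (2:ℕ) = ((Finsupp.single 0 1 + Finsupp.single 1 1) : Fin 2 →₀ ℕ).sum fun _ e => e := hsum11.symm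
        _ ≤ P.totalDegree := le_totalDegree (mem_support_iff.mpr this)
      · have : coeff (Finsupp.single 1 2) P ≠ 0 := by
          rw [hPform, expQ_coeff02]; exact h
        calc (2:ℕ) = (Finsupp.single 1 2 : Fin 2 →₀ ℕ).sum fun _ e => e := hsum02.symm
        _ ≤ P.totalDegree := le_totalDegree (mem_support_iff.mpr this)
    have hPne : P ≠ 0 := by
      intro h; rw [h] at hdeg; simp at hdeg
    have hunit_of_deg0 : ∀ h : MvPolynomial (Fin 2) ℚ, h ≠ 0 → h.totalDegree = 0 → IsUnit h := by
      intro h hne h0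
      have hc : coeff 0 h ≠ 0 := by
        intro hc0
        exact hne (by rw [eq_C_of_totalDegree_eq_zero h0, hc0, map_zero])
      rw [eq_C_of_totalDegree_eq_zero h0]
      exact isUnit_iff_exists_inv.mpr ⟨C (coeff 0 h)⁻¹, by
        rw [← _root_.map_mul, mul_inv_cancel₀ hc, _root_.map_one]⟩
    refine ⟨hdeg, ?_, ?_⟩
    · intro hunit
      obtain ⟨Q, hQ⟩ := isUnit_iff_exists_inv.mp hunit
      have h2 : Q ≠ 0 := by
        intro h; rw [h, mul_zero] at hQ; exact one_ne_zero hQ.symm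
      have h3 := totalDegree_mul_eq hPne h2
      rw [hQ] at h3
      rw [hdeg, totalDegree_one] at h3
      omega
    · rintro f g hfg
      by_contra hcon
      push_neg at hcon
      obtain ⟨hfu, hgu⟩ := hcon
      have hfne : f ≠ 0 := by rintro rfl; rw [zero_mul] at hfg; exact hPne hfg
      have hgne : g ≠ 0 := by rintro rfl; rw [mul_zero] at hfg; exact hPne hfg
      have hsum : f.totalDegree + g.totalDegree = 2 := by
        rw [← totalDegree_mul_eq hfne hgne, ← hfg, hdeg]
      have hdf : f.totalDegree = 1 := by
        rcases Nat.eq_zero_or_pos f.totalDegree with h0 | h0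
        · exact absurd (hunit_of_deg0 f hfne h0) hfu
        rcases Nat.eq_zero_or_pos g.totalDegree with h1 | h1
        · exact absurd (hunit_of_deg0 g hgne h1) hgu
        omega
      have hfrep := rep_deg_le_one f (by omega)
      set f0 := coeff 0 f with hf0
      set f1 := coeff (Finsupp.single 0 1) f with hf1
      set f2 := coeff (Finsupp.single 1 1) f with hf2
      have hf12 : ¬(f1 = 0 ∧ f2 = 0) := by
        rintro ⟨e1, e2⟩
        rw [e1, e2] at hfrep
        have : f.totalDegree = 0 := by
          rw [hfrep, show expQ 0 0 0 0 0 f0 = C f0 by unfold expQ; simp]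
          exact totalDegree_C _
        omega
      have hpoint : ∃ s₀ t₀ : ℚ, f1 * s₀ + f2 * t₀ + f0 = 0 := by
        by_cases h10 : f1 = 0
        · have h20 : f2 ≠ 0 := by tauto
          exact ⟨0, -f0 / f2, by field_simp; try ring⟩
        · exact ⟨-f0 / f1, 0, by field_simp; try ring⟩
      obtain ⟨s₀, t₀, hst⟩ := hpoint
      apply CONTRA s₀ t₀ f2 (-f1) (by intro h; exact hf12 ⟨by linarith [h.2], h.1⟩)
      intro r
      have hevalf : eval ![s₀ + f2 * r, t₀ + -f1 * r] f = 0 := by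
        rw [hfrep, expQ_eval]
        linear_combination hst
      have hevalP : eval ![s₀ + f2 * r, t₀ + -f1 * r] P = 0 := by
        rw [hfg, _root_.map_mul, hevalf, zero_mul]
      rw [hPform, expQ_eval] at hevalP
      rw [hG3 (s₀ + f2 * r) (t₀ + -f1 * r)]
      linear_combination hevalP
end
end
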